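/- Let G be a graph and F a set of edges (pairs of vertices) of size at most k such that the symmetric-difference graph H = G △ F is a disjoint union of exactly p stars. Then at most p + 2k vertices of G have degree at least 2. -/

import Mathlib

open SimpleGraph

/-- The graph obtained from `G` by toggling (adding/deleting) the edges in `F`. -/
def editedGraph {V : Type*} (G : SimpleGraph V) (F : Set (Sym2 V)) : SimpleGraph V :=
  SimpleGraph.fromEdgeSet (symmDiff G.edgeSet F)

/-- A graph is a starforest: every connected component is a star, i.e. has a center
adjacent to all other vertices of the component, the non-center vertices being
pairwise non-adjacent. -/
def IsStarGraph {V : Type*} (H : SimpleGraph V) : Prop :=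
  ∀ c : H.ConnectedComponent, ∃ ctr ∈ c.supp,
    (∀ v ∈ c.supp, v ≠ ctr → H.Adj ctr v) ∧
    (∀ u ∈ c.supp, ∀ v ∈ c.supp, u ≠ ctr → v ≠ ctr → ¬ H.Adj u v)

/-- A graph is a disjoint union of complete `t`-partite graphs: there is a colouring
with at most `t` colours such that two distinct vertices in the same connected
component are adjacent iff they get different colours. -/
def IsTPartiteCluster {V : Type*} (t : ℕ) (H : SimpleGraph V) : Prop :=
  ∃ f : V → Fin t, ∀ u v : V, u ≠ v → H.Reachable u v → (H.Adj u v ↔ f u ≠ f v)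

lemma endpoints_ncard_le {V : Type*} (F : Set (Sym2 V)) (hFfin : F.Finite) :
    {v : V | ∃ e ∈ F, v ∈ e}.ncard ≤ 2 * F.ncard := by
  refine Set.Finite.induction_on
    (motive := fun s _ => {v : V | ∃ e ∈ s, v ∈ e}.ncard ≤ 2 * s.ncard) F hFfin (by simp) ?_
  intro a s ha hs ih
  have hset : {v : V | ∃ e ∈ insert a s, v ∈ e}
      = {v : V | v ∈ a} ∪ {v : V | ∃ e ∈ s, v ∈ e} := by
    ext v; simp [or_and_right, exists_or]
  have ha2 : {v : V | v ∈ a}.ncard ≤ 2 := by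
    induction a using Sym2.ind with
    | _ x y =>
      have : {v : V | v ∈ s(x, y)} = {x, y} := by ext v; simp [Sym2.mem_iff]
      rw [this]
      exact (Set.ncard_insert_le _ _).trans (by simp)
  calc {v : V | ∃ e ∈ insert a s, v ∈ e}.ncard
      ≤ {v : V | v ∈ a}.ncard + {v : V | ∃ e ∈ s, v ∈ e}.ncard := by
        rw [hset]; exact Set.ncard_union_le _ _
    _ ≤ 2 + 2 * s.ncard := Nat.add_le_add ha2 ih
    _ = 2 * (insert a s).ncard := by
        rw [Set.ncard_insert_of_notMem ha hs]; ring

/-- If `G △ F` with `|F| ≤ k` is a disjoint union of exactly `p` stars,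
then at most `p + 2k` vertices of `G` have degree at least 2. -/
theorem starforest_degree_bound {V : Type*} [Fintype V] (G : SimpleGraph V)
    (F : Set (Sym2 V)) (k p : ℕ)
    (hdiag : ∀ e ∈ F, ¬ e.IsDiag) (hF : F.ncard ≤ k)
    (hstar : IsStarGraph (editedGraph G F))
    (hp : Nat.card (editedGraph G F).ConnectedComponent = p) :
    {v : V | 2 ≤ (G.neighborSet v).ncard}.ncard ≤ p + 2 * k := by
  classical
  set H := editedGraph G F with hHdef
  set C : Set V := {v | 2 ≤ (H.neighborSet v).ncard} with hCdef
  set T : Set V := {v | ∃ e ∈ F, v ∈ e} with hTdef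
  -- Every high-degree vertex of H is a center of its component.
  have hcenter : ∀ v ∈ C, ∀ ctr,
      (∀ u ∈ (H.connectedComponentMk v).supp, ∀ w ∈ (H.connectedComponentMk v).supp,
        u ≠ ctr → w ≠ ctr → ¬ H.Adj u w) → v = ctr := by
    intro v hv ctr hnon
    by_contra hne
    have hsub : H.neighborSet v ⊆ {ctr} := by
      intro w hw
      have hwadj : H.Adj v w := hw
      have hwsupp : w ∈ (H.connectedComponentMk v).supp := by
        rw [ConnectedComponent.mem_supp_iff]
        exact (ConnectedComponent.sound hwadj.reachable).symm
      have hvsupp : v ∈ (H.connectedComponentMk v).supp := by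
        rw [ConnectedComponent.mem_supp_iff]
      by_contra hwc
      exact hnon v hvsupp w hwsupp hne hwc hwadj
    have h1 : (H.neighborSet v).ncard ≤ 1 := by
      have := Set.ncard_le_ncard hsub (Set.finite_singleton ctr)
      simpa using this
    have h2 : 2 ≤ (H.neighborSet v).ncard := hv
    omega
  -- C injects into components, so |C| ≤ p
  have hC : C.ncard ≤ p := by
    have hinj : Function.Injective (fun v : C => H.connectedComponentMk v.1) := by
      rintro ⟨u, hu⟩ ⟨v, hv⟩ h
      simp only at h
      obtain ⟨ctr, _, _, hnon⟩ := hstar (H.connectedComponentMk u)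
      have hu' := hcenter u hu ctr hnon
      have hv' := hcenter v hv ctr (by rw [h] at hnon; exact hnon)
      simp [hu', hv']
    have := Nat.card_le_card_of_injective _ hinj
    rwa [Nat.card_coe_set_eq, hp] at this
  -- T has at most 2k elements
  have hT : T.ncard ≤ 2 * k := by
    calc T.ncard ≤ 2 * F.ncard := endpoints_ncard_le F (Set.toFinite F)
      _ ≤ 2 * k := by omega
  -- every high-degree vertex of G is in C ∪ T
  have hsub : {v : V | 2 ≤ (G.neighborSet v).ncard} ⊆ C ∪ T := by
    intro v hv
    by_cases hvT : v ∈ T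
    · exact Or.inr hvT
    · left
      have hnb : H.neighborSet v = G.neighborSet v := by
        ext u
        have hnF : s(v, u) ∉ F := fun hmem => hvT ⟨s(v, u), hmem, by simp⟩
        simp only [mem_neighborSet, hHdef, editedGraph, fromEdgeSet_adj,
          Set.mem_symmDiff, mem_edgeSet]
        constructor
        · rintro ⟨h1 | h2, hne⟩
          · exact h1.1
          · exact absurd h2.1 hnF
        · intro h
          exact ⟨Or.inl ⟨h, hnF⟩, h.ne⟩
      simpa [hCdef, hnb] using hv
  calc {v : V | 2 ≤ (G.neighborSet v).ncard}.ncard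
      ≤ (C ∪ T).ncard := Set.ncard_le_ncard hsub (Set.toFinite _)
    _ ≤ C.ncard + T.ncard := Set.ncard_union_le _ _
    _ ≤ p + 2 * k := Nat.add_le_add hC hT
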